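/- Combined elliptic stability: let a, ã ∈ 𝒜 with principals A, Ã, and let g, g̃ : [0,1] → ℝ be C¹ with |g'(s)| ≥ c₀ > 0. Suppose (i) |(A∘g)'(s) − (Ã∘g̃)'(s)| ≤ δ₁ for all s, and (ii) ‖g − g̃‖_∞ + ‖g' − g̃'‖_∞ ≤ δ₂. Then |a(r) − ã(r)| ≤ (δ₁ + (a_ub + C₁‖g'‖_∞)·δ₂)/c₀ for every r in the range of g. -/
import Mathlib


/-- Combined elliptic stability. Let `a, b` be admissible
(Lipschitz with constant `C₁`, `0 < a_lb ≤ a, b ≤ a_ub`) with principals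
`A s = ∫₀ˢ a`, `B s = ∫₀ˢ b`, and let `g, h` be C¹ on `[0,1]` with
`|g'| ≥ c₀ > 0` and `‖g'‖_∞ ≤ Mg`. If
(i) `|(A∘g)'(s) − (B∘h)'(s)| ≤ δ₁` on `[0,1]`, and
(ii) `‖g − h‖_∞ + ‖g' − h'‖_∞ ≤ δ₂` on `[0,1]`, then
`|a r − b r| ≤ (δ₁ + (a_ub + C₁·Mg)·δ₂)/c₀` for every `r` in the range of `g`. -/
theorem combined_elliptic_stability
    (a b : ℝ → ℝ)
    (a_lb a_ub : ℝ) (hlb : 0 < a_lb)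
    (hbnd : ∀ s : ℝ, a_lb ≤ a s ∧ a s ≤ a_ub ∧ a_lb ≤ b s ∧ b s ≤ a_ub)
    (C₁ : ℝ) (hC₁ : 0 ≤ C₁)
    (haLip : ∀ x y : ℝ, |a x - a y| ≤ C₁ * |x - y|)
    (hbLip : ∀ x y : ℝ, |b x - b y| ≤ C₁ * |x - y|)
    (g g' h h' : ℝ → ℝ)
    (hg : ∀ s ∈ Set.Icc (0:ℝ) 1, HasDerivAt g (g' s) s)
    (hh : ∀ s ∈ Set.Icc (0:ℝ) 1, HasDerivAt h (h' s) s)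
    (c₀ : ℝ) (hc₀ : 0 < c₀) (hglb : ∀ s ∈ Set.Icc (0:ℝ) 1, c₀ ≤ |g' s|)
    (Mg : ℝ) (hMg : ∀ s ∈ Set.Icc (0:ℝ) 1, |g' s| ≤ Mg)
    (δ₁ δ₂ : ℝ)
    (hδ₁ : ∀ s ∈ Set.Icc (0:ℝ) 1,
      |deriv (fun t => ∫ r in (0:ℝ)..(g t), a r) s -
        deriv (fun t => ∫ r in (0:ℝ)..(h t), b r) s| ≤ δ₁)
    (hδ₂ : ∀ s ∈ Set.Icc (0:ℝ) 1, |g s - h s| + |g' s - h' s| ≤ δ₂) :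
    ∀ r ∈ g '' Set.Icc (0:ℝ) 1,
      |a r - b r| ≤ (δ₁ + (a_ub + C₁ * Mg) * δ₂) / c₀ := by
  have ha_cont : Continuous a := by
    have : LipschitzWith (Real.toNNReal C₁) a := by
      apply LipschitzWith.of_dist_le_mul
      intro x y
      simpa [Real.dist_eq, Real.coe_toNNReal _ hC₁] using haLip x y
    exact this.continuous
  have hb_cont : Continuous b := by
    have : LipschitzWith (Real.toNNReal C₁) b := by
      apply LipschitzWith.of_dist_le_mul
      intro x y
      simpa [Real.dist_eq, Real.coe_toNNReal _ hC₁] using hbLip x y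
    exact this.continuous
  rintro r ⟨s, hs, rfl⟩
  have hA : HasDerivAt (fun t => ∫ r in (0:ℝ)..(g t), a r) (a (g s) * g' s) s := by
    have h1 : HasDerivAt (fun u => ∫ r in (0:ℝ)..u, a r) (a (g s)) (g s) :=
      intervalIntegral.integral_hasDerivAt_right (ha_cont.intervalIntegrable _ _)
        (ha_cont.stronglyMeasurableAtFilter _ _) ha_cont.continuousAt
    exact h1.comp s (hg s hs)
  have hB : HasDerivAt (fun t => ∫ r in (0:ℝ)..(h t), b r) (b (h s) * h' s) s := by
    have h1 : HasDerivAt (fun u => ∫ r in (0:ℝ)..u, b r) (b (h s)) (h s) :=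
      intervalIntegral.integral_hasDerivAt_right (hb_cont.intervalIntegrable _ _)
        (hb_cont.stronglyMeasurableAtFilter _ _) hb_cont.continuousAt
    exact h1.comp s (hh s hs)
  have e1 : |a (g s) * g' s - b (h s) * h' s| ≤ δ₁ := by
    have := hδ₁ s hs
    rwa [hA.deriv, hB.deriv] at this
  have hbd := hbnd (g s)
  have hbd2 := hbnd (h s)
  have hMg' := hMg s hs
  have hglb' := hglb s hs
  have hδ₂' := hδ₂ s hs
  have habs1 : |b (h s)| ≤ a_ub := by
    rw [abs_of_pos (lt_of_lt_of_le hlb hbd2.2.2.1)]; exact hbd2.2.2.2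
  have hLip' : |b (h s) - b (g s)| ≤ C₁ * |h s - g s| := hbLip _ _
  have key : |a (g s) - b (g s)| * c₀ ≤ δ₁ + (a_ub + C₁ * Mg) * δ₂ := by
    have h0 : |a (g s) - b (g s)| * c₀ ≤ |a (g s) - b (g s)| * |g' s| :=
      mul_le_mul_of_nonneg_left hglb' (abs_nonneg _)
    have h1 : |a (g s) - b (g s)| * |g' s| = |(a (g s) - b (g s)) * g' s| :=
      (abs_mul _ _).symm
    have h2 : (a (g s) - b (g s)) * g' s =
        (a (g s) * g' s - b (h s) * h' s) + b (h s) * (h' s - g' s)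
          + (b (h s) - b (g s)) * g' s := by ring
    have h3 : |(a (g s) - b (g s)) * g' s| ≤
        δ₁ + |b (h s)| * |h' s - g' s| + |b (h s) - b (g s)| * |g' s| := by
      rw [h2]
      calc _ ≤ |(a (g s) * g' s - b (h s) * h' s) + b (h s) * (h' s - g' s)|
              + |(b (h s) - b (g s)) * g' s| := abs_add_le _ _
        _ ≤ |a (g s) * g' s - b (h s) * h' s| + |b (h s) * (h' s - g' s)|
              + |(b (h s) - b (g s)) * g' s| := by
            gcongr; exact abs_add_le _ _
        _ = |a (g s) * g' s - b (h s) * h' s| + |b (h s)| * |h' s - g' s|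
              + |b (h s) - b (g s)| * |g' s| := by rw [abs_mul, abs_mul]
        _ ≤ _ := by gcongr
    have h4 : |b (h s)| * |h' s - g' s| ≤ a_ub * |g' s - h' s| := by
      rw [abs_sub_comm]; exact mul_le_mul_of_nonneg_right habs1 (abs_nonneg _)
    have h5 : |b (h s) - b (g s)| * |g' s| ≤ C₁ * |g s - h s| * Mg := by
      rw [abs_sub_comm (h s)] at hLip'
      calc |b (h s) - b (g s)| * |g' s| ≤ (C₁ * |g s - h s|) * |g' s| :=
            mul_le_mul_of_nonneg_right hLip' (abs_nonneg _)
        _ ≤ C₁ * |g s - h s| * Mg := by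
            apply mul_le_mul_of_nonneg_left hMg'
            positivity
    have hub : (0:ℝ) ≤ a_ub := le_trans hlb.le (le_trans hbd.1 hbd.2.1)
    have hMg0 : (0:ℝ) ≤ Mg := le_trans (le_trans hc₀.le hglb') hMg'
    nlinarith [abs_nonneg (g s - h s), abs_nonneg (g' s - h' s),
      mul_nonneg hC₁ hMg0]
  rw [le_div_iff₀ hc₀]
  exact key
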